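/- Let $(X, \Sigma, \mu)$, $(Y, T, \nu)$, $(X \times Y, \Upsilon, \upsilon)$ be probability spaces with a topology $\mathfrak{S} \subseteq \Sigma$ on $X$ and $\mathfrak{T} \subseteq T$ on $Y$, satisfying $[C]$ (the Fubini property: for each $E \in \Upsilon$ there is a $\mu$-null $N \in \Sigma$ such that $E_x \in T$ for $x \notin N$, $x \mapsto \nu(E_x)$ is measurable on $N^c$, and $\upsilon(E) = \int_{N^c} \nu(E_x)\,d\mu$). If the only continuous $\mu$-null function on $X$ is $0$, and the only continuous $\nu$-null function on $Y$ is $0$, then the only function on $X \times Y$ that is continuous for the product topology and $\upsilon$-null is $0$. -/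

import Mathlib

open MeasureTheory
open scoped ENNReal

/-- The Fubini property `[C]`. -/
def PropC {X Y : Type*} [MeasurableSpace X] [MeasurableSpace Y]
    (mXY : MeasurableSpace (X × Y)) (μ : Measure X) (ν : Measure Y)
    (υ : @Measure (X × Y) mXY) : Prop :=
  ∀ E : Set (X × Y), MeasurableSet[mXY] E →
    ∃ N : Set X, MeasurableSet N ∧ μ N = 0 ∧
      (∀ x ∉ N, MeasurableSet {y | (x, y) ∈ E}) ∧
      (∀ t : Set ℝ≥0∞, MeasurableSet t →
        MeasurableSet (Nᶜ ∩ {x | ν {y | (x, y) ∈ E} ∈ t})) ∧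
      υ E = ∫⁻ x in Nᶜ, ν {y | (x, y) ∈ E} ∂μ

theorem stmt16 {X Y : Type*} [TopologicalSpace X] [TopologicalSpace Y]
    [mX : MeasurableSpace X] [mY : MeasurableSpace Y]
    (mXY : MeasurableSpace (X × Y))
    (μ : Measure X) (ν : Measure Y) (υ : @Measure (X × Y) mXY)
    [IsProbabilityMeasure μ] [IsProbabilityMeasure ν]
    (hυprob : @IsProbabilityMeasure _ mXY υ)
    -- the topologies consist of measurable sets
    (hSX : ∀ s : Set X, IsOpen s → MeasurableSet s)
    (hSY : ∀ s : Set Y, IsOpen s → MeasurableSet s)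
    (hC : PropC mXY μ ν υ)
    -- the only continuous `μ`-null function on `X` is `0`
    (hNX : ∀ f : X → ℝ, Continuous f → Measurable f → μ {x | f x ≠ 0} = 0 → f = 0)
    -- the only continuous `ν`-null function on `Y` is `0`
    (hNY : ∀ g : Y → ℝ, Continuous g → Measurable g → ν {y | g y ≠ 0} = 0 → g = 0) :
    -- then the only continuous `υ`-null function on `X × Y` is `0`
    ∀ h : X × Y → ℝ, Continuous h → Measurable[mXY] h → υ {z | h z ≠ 0} = 0 → h = 0 := by
  classical
  intro h hc hm hnull
  have contMeasX : ∀ f : X → ℝ, Continuous f → Measurable f := fun f hf =>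
    measurable_of_isOpen fun s hs => hSX _ (hs.preimage hf)
  have contMeasY : ∀ g : Y → ℝ, Continuous g → Measurable g := fun g hg =>
    measurable_of_isOpen fun s hs => hSY _ (hs.preimage hg)
  have hEmeas : MeasurableSet[mXY] {z : X × Y | h z ≠ 0} :=
    hm (measurableSet_singleton 0).compl
  obtain ⟨N, hNmeas, hNnull, hsec, hFmeas, hint⟩ := hC _ hEmeas
  set F : X → ℝ≥0∞ := fun x => ν {y | (x, y) ∈ {z : X × Y | h z ≠ 0}} with hF
  set G : X → ℝ≥0∞ := fun x => if x ∈ N then 0 else F x with hG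
  have hGmeas : Measurable G := by
    intro t ht
    have : G ⁻¹' t = (if (0:ℝ≥0∞) ∈ t then N else ∅) ∪ (Nᶜ ∩ {x | F x ∈ t}) := by
      ext x
      by_cases hx : x ∈ N <;> by_cases h0 : (0:ℝ≥0∞) ∈ t <;>
        simp [hG, Set.mem_preimage, hx, h0]
    rw [this]
    exact MeasurableSet.union (by split <;> [exact hNmeas; exact MeasurableSet.empty])
      (hFmeas t ht)
  have hintG : ∫⁻ x, G x ∂(μ.restrict Nᶜ) = 0 := by
    have heq : ∫⁻ x in Nᶜ, G x ∂μ = ∫⁻ x in Nᶜ, F x ∂μ := by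
      apply setLIntegral_congr_fun hNmeas.compl
      intro x hx
      have hxN : x ∉ N := hx
      simp [hG, hxN]
    rw [heq, ← hint, hnull]
  have hGzero : ∀ᵐ x ∂(μ.restrict Nᶜ), G x = 0 :=
    (lintegral_eq_zero_iff hGmeas).mp hintG
  -- the set where G ≠ 0 is μ-null
  have hAnull : μ {x | G x ≠ 0} = 0 := by
    have hAmeas : MeasurableSet {x | G x ≠ 0} :=
      (hGmeas (measurableSet_singleton 0)).compl
    have h1 : μ.restrict Nᶜ {x | G x ≠ 0} = 0 := hGzero
    rw [Measure.restrict_apply hAmeas] at h1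
    have hsub : {x | G x ≠ 0} ⊆ {x | G x ≠ 0} ∩ Nᶜ := by
      intro x hx
      refine ⟨hx, fun hxN => hx ?_⟩
      simp [hG, hxN]
    have h2 : μ {x | G x ≠ 0} ≤ μ ({x | G x ≠ 0} ∩ Nᶜ) := measure_mono hsub
    rw [h1] at h2
    exact le_antisymm h2 zero_le
  -- the bad set
  have hBnull : μ (N ∪ {x | G x ≠ 0}) = 0 :=
    measure_union_null hNnull hAnull
  -- for x outside the bad set, the section of h at x vanishes
  have hsection : ∀ x, x ∉ N ∪ {x | G x ≠ 0} → ∀ y, h (x, y) = 0 := by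
    intro x hx y
    have hxN : x ∉ N := fun hxN => hx (Or.inl hxN)
    have hGx : G x = 0 := by
      by_contra hne; exact hx (Or.inr hne)
    have hFx : F x = 0 := by
      simpa [hG, hxN] using hGx
    have hgcont : Continuous fun y => h (x, y) :=
      hc.comp (continuous_const.prodMk continuous_id)
    have := hNY (fun y => h (x, y)) hgcont (contMeasY _ hgcont) hFx
    exact congrFun this y
  funext z
  obtain ⟨x, y⟩ := z
  have hfcont : Continuous fun x' => h (x', y) :=
    hc.comp (continuous_id.prodMk continuous_const)
  have hfnull : μ {x' | (fun x' => h (x', y)) x' ≠ 0} = 0 := by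
    refine measure_mono_null ?_ hBnull
    intro x' hx'
    by_contra hx'B
    exact hx' (hsection x' hx'B y)
  have := hNX _ hfcont (contMeasX _ hfcont) hfnull
  exact congrFun this x
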